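/- Let F̂ ∈ L¹_loc(ℝ²) and suppose A := ‖(1+|ξ|)F̂‖_{L²(ℝ²)} < ∞ and B := ‖(1+|ξ|²)F̂‖_{L²(ℝ²)} < ∞. Then for every R ≥ 0, ∫_{ℝ²}|F̂(ξ)|dξ ≤ C A (ln(e+R))^{1/2} + C B/(1+R), for an absolute constant C. -/

import Mathlib

open Real MeasureTheory Set Filter
open scoped ENNReal NNReal

noncomputable abbrev EE := EuclideanSpace ℝ (Fin 2)
noncomputable def VV : ℝ := (volume (Metric.ball (0:EE) 1)).toReal
lemma VV_nonneg : 0 ≤ VV := ENNReal.toReal_nonneg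

lemma radial_lintegral (g : ℝ → ℝ) (hg : Integrable (fun x : EE => g ‖x‖) volume)
    (hg0 : ∀ r, 0 ≤ g r) :
    ∫⁻ x : EE, ENNReal.ofReal (g ‖x‖) ∂volume
      = ENNReal.ofReal (2 * VV * ∫ y in Ioi (0:ℝ), y * g y) := by
  rw [← ofReal_integral_eq_lintegral_ofReal hg (ae_of_all _ fun x => hg0 _)]
  congr 1
  rw [integral_fun_norm_addHaar volume g]
  have h2 : Module.finrank ℝ EE = 2 := by simp [finrank_euclideanSpace]
  rw [h2]
  simp only [pow_one, smul_eq_mul, nsmul_eq_mul, Nat.cast_ofNat]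
  rw [measureReal_def, VV, mul_assoc, ← integral_const_mul]
  norm_num
  rw [integral_const_mul]

lemma one_dim_low (R : ℝ) (hR : 0 ≤ R) :
    ∫ y in Ioi (0:ℝ), y * (Iio R).indicator (fun r => ((1+r)⁻¹)^2) y
      ≤ Real.log (Real.exp 1 + R) := by
  have hkey : ∀ y : ℝ, y * (Iio R).indicator (fun r => ((1+r)⁻¹)^2) y
      = (Iio R).indicator (fun r => r * ((1+r)⁻¹)^2) y := by
    intro y; by_cases h : y ∈ Iio R <;> simp [indicator, h]
  simp_rw [hkey]
  rw [setIntegral_indicator measurableSet_Iio, Ioi_inter_Iio]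
  have hint2 : IntegrableOn (fun y : ℝ => (1+y)⁻¹) (Ioo 0 R) volume := by
    apply (ContinuousOn.integrableOn_Icc (a := 0) (b := R) ?_).mono_set Ioo_subset_Icc_self
    intro y hy
    exact (continuousAt_const.add continuousAt_id).continuousWithinAt.inv₀
      (ne_of_gt (show (0:ℝ) < 1 + y by linarith [hy.1]))
  have hint1 : IntegrableOn (fun y : ℝ => y * ((1+y)⁻¹)^2) (Ioo 0 R) volume := by
    apply (ContinuousOn.integrableOn_Icc (a := 0) (b := R) ?_).mono_set Ioo_subset_Icc_self
    intro y hy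
    exact (continuousAt_id.mul (((continuousAt_const.add continuousAt_id).inv₀
      (ne_of_gt (show (0:ℝ) < 1 + y by linarith [hy.1]))).pow 2)).continuousWithinAt
  have hmono : ∫ y in Ioo (0:ℝ) R, y * ((1+y)⁻¹)^2 ≤ ∫ y in Ioo (0:ℝ) R, (1+y)⁻¹ := by
    refine setIntegral_mono_on hint1 hint2 measurableSet_Ioo ?_
    intro y hy
    have h1 : (0:ℝ) < 1 + y := by nlinarith [hy.1]
    have hy1 : y * (1+y)⁻¹ ≤ 1 := by
      rw [← div_eq_mul_inv, div_le_one h1]; linarith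
    calc y * ((1+y)⁻¹)^2 = (y * (1+y)⁻¹) * (1+y)⁻¹ := by ring
      _ ≤ 1 * (1+y)⁻¹ := mul_le_mul_of_nonneg_right hy1 (inv_nonneg.2 h1.le)
      _ = (1+y)⁻¹ := one_mul _
  refine hmono.trans ?_
  have hval : ∫ y in Ioo (0:ℝ) R, (1+y)⁻¹ = Real.log (1 + R) := by
    rw [← integral_Ioc_eq_integral_Ioo, ← intervalIntegral.integral_of_le hR]
    rw [show (fun y : ℝ => (1+y)⁻¹) = (fun y : ℝ => ((1:ℝ)+y)⁻¹) from rfl]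
    rw [intervalIntegral.integral_comp_add_left (fun y : ℝ => y⁻¹) 1]
    rw [integral_inv (by rw [uIcc_of_le (by linarith)]; intro h; simp at h; nlinarith [h.1])]
    · rw [add_zero]; simp
  rw [hval]
  have : (1:ℝ) + R ≤ Real.exp 1 + R := by nlinarith [Real.add_one_le_exp 1]
  exact Real.log_le_log (by linarith) this

lemma deriv_high (y : ℝ) :
    HasDerivAt (fun y : ℝ => -((1+y^2)⁻¹/2)) (y * ((1+y^2)⁻¹)^2) y := by
  have h0 : (1:ℝ) + y^2 ≠ 0 := by positivity
  have h1 : HasDerivAt (fun y : ℝ => 1 + y^2) (2*y) y := by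
    simpa using ((hasDerivAt_pow 2 y).const_add 1)
  have h2 := (h1.inv h0).div_const 2
  have h3 := h2.neg
  exact h3.congr_deriv (by field_simp)

lemma tendsto_high : Filter.Tendsto (fun y : ℝ => -((1+y^2)⁻¹/2)) Filter.atTop (nhds 0) := by
  have h1 : Filter.Tendsto (fun y : ℝ => 1 + y^2) Filter.atTop Filter.atTop :=
    Filter.tendsto_atTop_add_const_left _ 1 (tendsto_pow_atTop two_ne_zero)
  have := (h1.inv_tendsto_atTop).div_const 2
  simpa using this.neg

lemma high_pos (R : ℝ) (hR : 0 ≤ R) : ∀ y ∈ Ioi R, 0 ≤ y * ((1+y^2)⁻¹)^2 := by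
  intro y hy
  have : 0 < y := lt_of_le_of_lt hR hy
  positivity

lemma integrableOn_high (R : ℝ) (hR : 0 ≤ R) :
    IntegrableOn (fun y : ℝ => y * ((1+y^2)⁻¹)^2) (Ioi R) volume :=
  integrableOn_Ioi_deriv_of_nonneg' (fun y _ => deriv_high y) (high_pos R hR) tendsto_high

lemma integral_high (R : ℝ) (hR : 0 ≤ R) :
    ∫ y in Ioi R, y * ((1+y^2)⁻¹)^2 ≤ 2/(1+R)^2 := by
  rw [integral_Ioi_of_hasDerivAt_of_nonneg' (fun y _ => deriv_high y) (high_pos R hR)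
    tendsto_high]
  have h1 : (0:ℝ) < 1 + R^2 := by positivity
  have h2 : (0:ℝ) < (1+R)^2 := by positivity
  rw [zero_sub, neg_neg, inv_eq_one_div, div_div, div_le_div_iff₀ (by positivity) h2]
  nlinarith [sq_nonneg (1-R)]

lemma low_freq (R : ℝ) (hR : 0 ≤ R) :
    ∫⁻ x : EE in {x | ‖x‖ < R}, ENNReal.ofReal (((1+‖x‖)⁻¹)^2) ∂volume
      ≤ ENNReal.ofReal (2 * VV * Real.log (Real.exp 1 + R)) := by
  have hmeas : MeasurableSet {x : EE | ‖x‖ < R} :=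
    measurableSet_lt measurable_norm measurable_const
  have hcont : Continuous (fun x : EE => ((1+‖x‖)⁻¹)^2) :=
    ((continuous_const.add continuous_norm).inv₀ (fun x => (by positivity : (1:ℝ)+‖x‖ ≠ 0))).pow 2
  have hind : (fun x : EE => (Iio R).indicator (fun r => ((1+r)⁻¹)^2) ‖x‖)
      = {x : EE | ‖x‖ < R}.indicator (fun x => ((1+‖x‖)⁻¹)^2) := by
    funext x; by_cases h : ‖x‖ < R <;> simp [indicator, h]
  have hint : Integrable (fun x : EE => (Iio R).indicator (fun r => ((1+r)⁻¹)^2) ‖x‖) volume := by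
    rw [hind]
    refine (integrable_indicator_iff hmeas).2 ?_
    have : {x : EE | ‖x‖ < R} = Metric.ball 0 R := by ext x; simp [mem_ball_zero_iff]
    rw [this]
    exact (hcont.continuousOn.integrableOn_compact (isCompact_closedBall 0 R)).mono_set
      Metric.ball_subset_closedBall
  calc ∫⁻ x : EE in {x | ‖x‖ < R}, ENNReal.ofReal (((1+‖x‖)⁻¹)^2) ∂volume
      = ∫⁻ x : EE, ENNReal.ofReal ((Iio R).indicator (fun r => ((1+r)⁻¹)^2) ‖x‖) ∂volume := by
        rw [← lintegral_indicator hmeas]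
        congr 1; funext x
        by_cases h : ‖x‖ < R <;> simp [indicator, h]
    _ = ENNReal.ofReal (2 * VV * ∫ y in Ioi (0:ℝ),
          y * (Iio R).indicator (fun r => ((1+r)⁻¹)^2) y) := by
        refine radial_lintegral _ hint fun r => ?_
        by_cases h : r ∈ Iio R <;> simp [indicator, h] <;> positivity
    _ ≤ _ := by
        refine ENNReal.ofReal_le_ofReal ?_
        nlinarith [VV_nonneg, one_dim_low R hR]

lemma high_freq (R : ℝ) (hR : 0 ≤ R) :
    ∫⁻ x : EE in {x | ‖x‖ < R}ᶜ, ENNReal.ofReal (((1+‖x‖^2)⁻¹)^2) ∂volume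
      ≤ ENNReal.ofReal (2 * VV * (2/(1+R)^2)) := by
  have hmeas : MeasurableSet {x : EE | ‖x‖ < R} :=
    measurableSet_lt measurable_norm measurable_const
  have hint0 : Integrable (fun x : EE => ((1+‖x‖^2)⁻¹)^2) volume := by
    have h4 : ((Module.finrank ℝ EE : ℝ)) < 4 := by simp [finrank_euclideanSpace]; norm_num
    have hI := integrable_rpow_neg_one_add_norm_sq (μ := (volume : Measure EE)) (r := 4) h4
    have heq : (fun x : EE => ((1:ℝ)+‖x‖^2) ^ ((-4:ℝ)/2)) = (fun x : EE => ((1+‖x‖^2)⁻¹)^2) := by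
      funext x
      have hp : (0:ℝ) < 1 + ‖x‖^2 := by positivity
      rw [show ((-4:ℝ)/2) = -((2:ℕ):ℝ) by norm_num, Real.rpow_neg hp.le, Real.rpow_natCast,
        ← inv_pow]
    rw [← heq]; exact hI
  have hint : Integrable
      (fun x : EE => (Ici R).indicator (fun r => ((1+r^2)⁻¹)^2) ‖x‖) volume := by
    have hind : (fun x : EE => (Ici R).indicator (fun r => ((1+r^2)⁻¹)^2) ‖x‖)
        = ({x : EE | ‖x‖ < R}ᶜ).indicator (fun x => ((1+‖x‖^2)⁻¹)^2) := by
      funext x; by_cases h : ‖x‖ < R <;>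
        simp [indicator, h, not_lt.2, le_of_not_gt, mem_compl_iff, mem_setOf_eq, not_lt]
    rw [hind]
    exact hint0.indicator hmeas.compl
  calc ∫⁻ x : EE in {x | ‖x‖ < R}ᶜ, ENNReal.ofReal (((1+‖x‖^2)⁻¹)^2) ∂volume
      = ∫⁻ x : EE, ENNReal.ofReal ((Ici R).indicator (fun r => ((1+r^2)⁻¹)^2) ‖x‖) ∂volume := by
        rw [← lintegral_indicator hmeas.compl]
        congr 1; funext x
        by_cases h : ‖x‖ < R
        · simp [indicator, not_le.2 h, h]
        · simp [indicator, le_of_not_gt h, h]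
    _ = ENNReal.ofReal (2 * VV * ∫ y in Ioi (0:ℝ),
          y * (Ici R).indicator (fun r => ((1+r^2)⁻¹)^2) y) := by
        refine radial_lintegral _ hint fun r => ?_
        by_cases h : r ∈ Ici R <;> simp [indicator, h] <;> positivity
    _ ≤ _ := by
        refine ENNReal.ofReal_le_ofReal ?_
        have hb : ∫ y in Ioi (0:ℝ), y * (Ici R).indicator (fun r => ((1+r^2)⁻¹)^2) y
            ≤ 2/(1+R)^2 := by
          have hkey : ∀ y : ℝ, y * (Ici R).indicator (fun r => ((1+r^2)⁻¹)^2) y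
              = (Ici R).indicator (fun r => r * ((1+r^2)⁻¹)^2) y := by
            intro y; by_cases h : y ∈ Ici R <;> simp [indicator, h]
          simp_rw [hkey]
          rw [setIntegral_indicator measurableSet_Ici]
          refine le_trans (setIntegral_mono_set (integrableOn_high R hR)
            ((ae_restrict_iff' measurableSet_Ioi).2
              (ae_of_all _ fun y hy => high_pos R hR y hy)) ?_) (integral_high R hR)
          · refine (ae_le_set).2 (measure_mono_null ?_ (measure_singleton R))
            rintro y ⟨⟨-, h2⟩, h3⟩
            simp only [mem_Ioi, not_lt] at h3
            simp [le_antisymm h3 h2]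
        have h2 : (0:ℝ) ≤ 2 * VV := by nlinarith [VV_nonneg]
        nlinarith [VV_nonneg, hb, sq_nonneg (1+R),
          mul_le_mul_of_nonneg_left hb h2]

lemma rpow_two_eq (z : ℝ≥0∞) : z ^ (2:ℝ) = z ^ (2:ℕ) := by
  rw [← ENNReal.rpow_natCast]; norm_num

lemma region_CS (s : Set EE) (φ w : EE → ℝ)
    (hφm : AEMeasurable φ volume) (hwm : AEMeasurable w volume)
    (hφ0 : ∀ x, 0 ≤ φ x) :
    ∫⁻ x in s, ENNReal.ofReal (φ x * w x) ∂volume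
      ≤ eLpNorm φ 2 volume * (∫⁻ x in s, ENNReal.ofReal (w x) ^ (2:ℝ) ∂volume) ^ (1/2 : ℝ) := by
  have hpq : Real.HolderConjugate 2 2 := Real.HolderConjugate.two_two
  have hCS := ENNReal.lintegral_mul_le_Lp_mul_Lq (volume.restrict s) hpq
    (hφm.restrict.ennreal_ofReal) (hwm.restrict.ennreal_ofReal)
  simp only [Pi.mul_apply] at hCS
  calc ∫⁻ x in s, ENNReal.ofReal (φ x * w x) ∂volume
      = ∫⁻ x in s, ENNReal.ofReal (φ x) * ENNReal.ofReal (w x) ∂volume := by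
        congr 1; funext x; exact ENNReal.ofReal_mul (hφ0 x)
    _ ≤ (∫⁻ x in s, ENNReal.ofReal (φ x) ^ (2:ℝ) ∂volume) ^ (1/2:ℝ)
          * (∫⁻ x in s, ENNReal.ofReal (w x) ^ (2:ℝ) ∂volume) ^ (1/2:ℝ) := hCS
    _ ≤ _ := by
        refine mul_le_mul_left ?_ _
        have h1 : (∫⁻ x in s, ENNReal.ofReal (φ x) ^ (2:ℝ) ∂volume)
            ≤ ∫⁻ x, ENNReal.ofReal (φ x) ^ (2:ℝ) ∂volume := setLIntegral_le_lintegral _ _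
        refine le_trans (ENNReal.rpow_le_rpow h1 (by norm_num)) (le_of_eq ?_)
        rw [eLpNorm_eq_lintegral_rpow_enorm_toReal (by norm_num) (by norm_num)]
        simp only [ENNReal.toReal_ofNat]
        refine congrArg (· ^ (1/2:ℝ)) (lintegral_congr fun x => ?_)
        rw [Real.enorm_eq_ofReal (hφ0 x)]

theorem fourier_splitting_estimate :
    ∃ C : ℝ, 0 < C ∧
      ∀ (F : EuclideanSpace ℝ (Fin 2) → ℂ) (A B : ℝ),
        LocallyIntegrable F volume →
        MemLp (fun ξ => (1 + ‖ξ‖) * ‖F ξ‖) 2 volume →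
        MemLp (fun ξ => (1 + ‖ξ‖ ^ 2) * ‖F ξ‖) 2 volume →
        A = (eLpNorm (fun ξ => (1 + ‖ξ‖) * ‖F ξ‖) 2 volume).toReal →
        B = (eLpNorm (fun ξ => (1 + ‖ξ‖ ^ 2) * ‖F ξ‖) 2 volume).toReal →
        ∀ R : ℝ, 0 ≤ R →
          (∫⁻ ξ, ‖F ξ‖₊ ∂volume) ≤
            ENNReal.ofReal (C * A * Real.sqrt (Real.log (Real.exp 1 + R))
              + C * B / (1 + R)) := by
  refine ⟨Real.sqrt (4*VV) + 1, by positivity, ?_⟩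
  intro F A B hloc h1 h2 hA hB R hR
  set L := Real.log (Real.exp 1 + R) with hL
  set s : Set EE := {x : EE | ‖x‖ < R} with hs_def
  have hs : MeasurableSet s := measurableSet_lt measurable_norm measurable_const
  have hF := hloc.aestronglyMeasurable
  have hA0 : 0 ≤ A := hA ▸ ENNReal.toReal_nonneg
  have hB0 : 0 ≤ B := hB ▸ ENNReal.toReal_nonneg
  have hlog0 : 0 ≤ L := Real.log_nonneg (by nlinarith [Real.add_one_le_exp 1])
  have hR1 : (0:ℝ) < 1 + R := by linarith
  have hV2 : (0:ℝ) ≤ 2*VV := by nlinarith [VV_nonneg]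
  have hV4 : (0:ℝ) ≤ 4*VV := by nlinarith [VV_nonneg]
  have h2VL : (0:ℝ) ≤ 2*VV*L := mul_nonneg hV2 hlog0
  have h2VH : (0:ℝ) ≤ 2*VV*(2/(1+R)^2) := mul_nonneg hV2 (by positivity)
  have hφ1m : AEMeasurable (fun x : EE => (1+‖x‖) * ‖F x‖) volume :=
    (measurable_const.add measurable_norm).aemeasurable.mul hF.norm.aemeasurable
  have hw1m : AEMeasurable (fun x : EE => (1+‖x‖)⁻¹) volume :=
    ((measurable_const.add measurable_norm).inv).aemeasurable
  have hφ2m : AEMeasurable (fun x : EE => (1+‖x‖^2) * ‖F x‖) volume :=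
    (measurable_const.add (measurable_norm.pow_const 2)).aemeasurable.mul hF.norm.aemeasurable
  have hw2m : AEMeasurable (fun x : EE => (1+‖x‖^2)⁻¹) volume :=
    ((measurable_const.add (measurable_norm.pow_const 2)).inv).aemeasurable
  have hpt1 : ∀ x : EE, ((‖F x‖₊ : ℝ≥0∞)) = ENNReal.ofReal ((1+‖x‖) * ‖F x‖ * (1+‖x‖)⁻¹) := by
    intro x
    rw [show ((‖F x‖₊ : ℝ≥0∞)) = ENNReal.ofReal ‖F x‖ from (ofReal_norm (F x)).symm]
    congr 1
    have h0 : (1:ℝ)+‖x‖ ≠ 0 := by positivity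
    field_simp
  have hpt2 : ∀ x : EE,
      ((‖F x‖₊ : ℝ≥0∞)) = ENNReal.ofReal ((1+‖x‖^2) * ‖F x‖ * (1+‖x‖^2)⁻¹) := by
    intro x
    rw [show ((‖F x‖₊ : ℝ≥0∞)) = ENNReal.ofReal ‖F x‖ from (ofReal_norm (F x)).symm]
    congr 1
    have h0 : (1:ℝ)+‖x‖^2 ≠ 0 := by positivity
    field_simp
  -- low region
  have hlow : ∫⁻ x in s, (‖F x‖₊ : ℝ≥0∞) ∂volume
      ≤ ENNReal.ofReal (A * (Real.sqrt (2*VV) * Real.sqrt L)) := by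
    calc ∫⁻ x in s, (‖F x‖₊:ℝ≥0∞) ∂volume
        = ∫⁻ x in s, ENNReal.ofReal ((1+‖x‖)*‖F x‖ * (1+‖x‖)⁻¹) ∂volume :=
          lintegral_congr fun x => hpt1 x
      _ ≤ eLpNorm (fun x : EE => (1+‖x‖)*‖F x‖) 2 volume
            * (∫⁻ x in s, ENNReal.ofReal ((1+‖x‖)⁻¹) ^ (2:ℝ) ∂volume)^(1/2:ℝ) :=
          region_CS s _ _ hφ1m hw1m (fun x => by positivity)
      _ ≤ ENNReal.ofReal A * ENNReal.ofReal (2*VV*L) ^ (1/2:ℝ) := by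
          refine mul_le_mul' (le_of_eq ?_) ?_
          · rw [hA]
            exact (ENNReal.ofReal_toReal h1.eLpNorm_ne_top).symm
          · refine ENNReal.rpow_le_rpow ?_ (by norm_num)
            have heq : ∀ x : EE, ENNReal.ofReal ((1+‖x‖)⁻¹) ^ (2:ℝ)
                = ENNReal.ofReal (((1+‖x‖)⁻¹)^2) := fun x => by
              rw [rpow_two_eq, ← ENNReal.ofReal_pow (by positivity)]
            exact le_trans (le_of_eq (lintegral_congr fun x => heq x)) (low_freq R hR)
      _ = ENNReal.ofReal (A * (Real.sqrt (2*VV) * Real.sqrt L)) := by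
          rw [ENNReal.ofReal_rpow_of_nonneg h2VL (by norm_num),
            ← Real.sqrt_eq_rpow, Real.sqrt_mul hV2,
            ← ENNReal.ofReal_mul hA0]
  -- high region
  have hhigh : ∫⁻ x in sᶜ, (‖F x‖₊ : ℝ≥0∞) ∂volume
      ≤ ENNReal.ofReal (B * (Real.sqrt (4*VV) / (1+R))) := by
    calc ∫⁻ x in sᶜ, (‖F x‖₊:ℝ≥0∞) ∂volume
        = ∫⁻ x in sᶜ, ENNReal.ofReal ((1+‖x‖^2)*‖F x‖ * (1+‖x‖^2)⁻¹) ∂volume :=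
          lintegral_congr fun x => hpt2 x
      _ ≤ eLpNorm (fun x : EE => (1+‖x‖^2)*‖F x‖) 2 volume
            * (∫⁻ x in sᶜ, ENNReal.ofReal ((1+‖x‖^2)⁻¹) ^ (2:ℝ) ∂volume)^(1/2:ℝ) :=
          region_CS sᶜ _ _ hφ2m hw2m (fun x => by positivity)
      _ ≤ ENNReal.ofReal B * ENNReal.ofReal (2*VV*(2/(1+R)^2)) ^ (1/2:ℝ) := by
          refine mul_le_mul' (le_of_eq ?_) ?_
          · rw [hB]
            exact (ENNReal.ofReal_toReal h2.eLpNorm_ne_top).symm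
          · refine ENNReal.rpow_le_rpow ?_ (by norm_num)
            have heq : ∀ x : EE, ENNReal.ofReal ((1+‖x‖^2)⁻¹) ^ (2:ℝ)
                = ENNReal.ofReal (((1+‖x‖^2)⁻¹)^2) := fun x => by
              rw [rpow_two_eq, ← ENNReal.ofReal_pow (by positivity)]
            exact le_trans (le_of_eq (lintegral_congr fun x => heq x)) (high_freq R hR)
      _ = ENNReal.ofReal (B * (Real.sqrt (4*VV) / (1+R))) := by
          rw [ENNReal.ofReal_rpow_of_nonneg h2VH (by norm_num),
            ← Real.sqrt_eq_rpow,
            show 2*VV*(2/(1+R)^2) = (4*VV)/(1+R)^2 by ring,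
            Real.sqrt_div hV4, Real.sqrt_sq hR1.le,
            ← ENNReal.ofReal_mul hB0]
  calc ∫⁻ x, (‖F x‖₊ : ℝ≥0∞) ∂volume
      = (∫⁻ x in s, (‖F x‖₊:ℝ≥0∞) ∂volume) + ∫⁻ x in sᶜ, (‖F x‖₊:ℝ≥0∞) ∂volume :=
        (lintegral_add_compl _ hs).symm
    _ ≤ ENNReal.ofReal (A * (Real.sqrt (2*VV) * Real.sqrt L))
          + ENNReal.ofReal (B * (Real.sqrt (4*VV) / (1+R))) := add_le_add hlow hhigh
    _ = ENNReal.ofReal (A * (Real.sqrt (2*VV) * Real.sqrt L)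
          + B * (Real.sqrt (4*VV) / (1+R))) := by
        rw [← ENNReal.ofReal_add (by positivity) (by positivity)]
    _ ≤ _ := by
        refine ENNReal.ofReal_le_ofReal ?_
        have hs1 : Real.sqrt (2*VV) ≤ Real.sqrt (4*VV) + 1 :=
          le_trans (Real.sqrt_le_sqrt (show 2*VV ≤ 4*VV by nlinarith [VV_nonneg])) (by linarith)
        have hs2 : Real.sqrt (4*VV) ≤ Real.sqrt (4*VV) + 1 := by linarith
        refine add_le_add ?_ ?_
        · calc A * (Real.sqrt (2*VV) * Real.sqrt L)
              ≤ A * ((Real.sqrt (4*VV) + 1) * Real.sqrt L) := by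
                refine mul_le_mul_of_nonneg_left
                  (mul_le_mul_of_nonneg_right hs1 (Real.sqrt_nonneg _)) hA0
            _ = (Real.sqrt (4*VV) + 1) * A * Real.sqrt L := by ring
        · calc B * (Real.sqrt (4*VV) / (1+R))
              ≤ B * ((Real.sqrt (4*VV) + 1) / (1+R)) := by
                refine mul_le_mul_of_nonneg_left (by gcongr) hB0
            _ = (Real.sqrt (4*VV) + 1) * B / (1+R) := by ring
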